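/- Let p be a sequence of (modified) hairpin deletions transforming a binary string s into t, where both s and t have prefix 01 and suffix 1̄0̄ (i.e., suffix 0 1 under complement 0̄=1, 1̄=0). Then every intermediate string S_i satisfies S_i[1] = 0 and S_i[|S_i|] = 0̄; moreover S_i[2] = 1 or S_i[|S_i|−1] = 1̄. -/

import Mathlib

/-- characterwise complement followed by reversal: the "reverse complement" ⟵w -/
def rc (w : List Bool) : List Bool := (w.map (fun b => !b)).reverse

/-- one (modified) hairpin deletion step: remove a prefix (left) or suffix (right)
of length `ℓ ∈ [⌊|S|/2⌋]` that equals the reverse complement of the opposite end. -/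
def HDel (S T : List Bool) : Prop :=
  ∃ ℓ, 1 ≤ ℓ ∧ ℓ ≤ S.length / 2 ∧ S.take ℓ = rc (S.drop (S.length - ℓ)) ∧
    (T = S.drop ℓ ∨ T = S.take (S.length - ℓ))

/-- `HDelN n S T`: `T` is obtained from `S` by exactly `n` hairpin deletions. -/
def HDelN : ℕ → List Bool → List Bool → Prop
  | 0, S, T => S = T
  | n + 1, S, T => ∃ U, HDel S U ∧ HDelN n U T

/-- hairpin deletion distance (∞ if unreachable) -/
noncomputable def HDD (x y : List Bool) : ℕ∞ :=
  sInf {n : ℕ∞ | ∃ m : ℕ, n = (m : ℕ∞) ∧ HDelN m x y}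

/-- one (modified) hairpin completion step -/
def HComp (S T : List Bool) : Prop :=
  ∃ ℓ, 1 ≤ ℓ ∧ ℓ ≤ S.length ∧
    (T = S ++ rc (S.take ℓ) ∨ T = rc (S.drop (S.length - ℓ)) ++ S)

def HCompN : ℕ → List Bool → List Bool → Prop
  | 0, S, T => S = T
  | n + 1, S, T => ∃ U, HComp S U ∧ HCompN n U T

/-- hairpin completion distance (∞ if unreachable) -/
noncomputable def HCD (x y : List Bool) : ℕ∞ :=
  sInf {n : ℕ∞ | ∃ m : ℕ, n = (m : ℕ∞) ∧ HCompN m x y}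

/-- `w` concatenated with itself `k` times, `w^k` -/
def repL (w : List Bool) (k : ℕ) : List Bool := (List.replicate k w).flatten


private def Bad (S : List Bool) : Prop :=
  S[0]? = some false ∧ S[1]? = some false ∧
  S[S.length - 2]? = some true ∧ S[S.length - 1]? = some true

private lemma map_not_eq {o : Option Bool} {b : Bool}
    (h : Option.map (fun x => !x) o = some b) : o = some (!b) := by
  cases o with
  | none => simp at h
  | some a => simp at h; subst h; simp

private lemma pair {S : List Bool} {ℓ i : ℕ} (hℓ : ℓ ≤ S.length)
    (h : S.take ℓ = rc (S.drop (S.length - ℓ))) (hi : i < ℓ) :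
    S[i]? = Option.map (fun b => !b) S[S.length - 1 - i]? := by
  have h2 := congrArg (fun l => l[i]?) h
  simp only [rc] at h2
  rw [List.getElem?_take, if_pos hi,
    List.getElem?_reverse (by simp [List.length_drop]; omega)] at h2
  simp only [List.length_map, List.length_drop, List.getElem?_map, List.getElem?_drop] at h2
  have e : S.length - ℓ + (S.length - (S.length - ℓ) - 1 - i) = S.length - 1 - i := by omega
  rw [e] at h2
  exact h2

private lemma Bad_len {S : List Bool} (h : Bad S) : 4 ≤ S.length := by
  obtain ⟨h0, h1, h2, h3⟩ := h
  have l1 : 1 < S.length := (List.getElem?_eq_some_iff.mp h1).1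
  by_contra hlt
  push_neg at hlt
  have : S.length = 2 ∨ S.length = 3 := by omega
  rcases this with e | e
  · rw [e] at h2; norm_num at h2; rw [h2] at h0; simp at h0
  · rw [e] at h2; norm_num at h2; rw [h2] at h1; simp at h1

private lemma bad_back {S U : List Bool} (hd : HDel S U) (hU : Bad U) : Bad S := by
  obtain ⟨ℓ, hℓ1, hℓ2, hpair, hcase⟩ := hd
  have hℓn : ℓ ≤ S.length := le_trans hℓ2 (Nat.div_le_self _ _)
  have hU4 := Bad_len hU
  obtain ⟨u0, u1, u2, u3⟩ := hU
  have hp0 := pair hℓn hpair (show 0 < ℓ by omega)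
  simp only [Nat.sub_zero] at hp0
  rcases hcase with rfl | rfl
  · simp only [List.getElem?_drop, List.length_drop] at u0 u1 u2 u3 hU4
    rw [show ℓ + (S.length - ℓ - 2) = S.length - 2 by omega] at u2
    rw [show ℓ + (S.length - ℓ - 1) = S.length - 1 by omega] at u3
    refine ⟨?_, ?_, u2, u3⟩
    · rw [hp0, u3]; rfl
    · rcases Nat.lt_or_ge 1 ℓ with h1ℓ | h1ℓ
      · have hp1 := pair hℓn hpair h1ℓ
        rw [show S.length - 1 - 1 = S.length - 2 from by omega] at hp1
        rw [hp1, u2]; rfl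
      · have : ℓ = 1 := by omega
        subst this
        simpa using u0
  · simp only [List.getElem?_take, List.length_take] at u0 u1 u2 u3 hU4
    rw [Nat.min_eq_left (Nat.sub_le _ _)] at u2 u3 hU4
    rw [if_pos (by omega)] at u0 u1
    rw [if_pos (by omega)] at u2 u3
    have hend : S[S.length - 1]? = some true := by
      rw [u0] at hp0
      have := map_not_eq hp0.symm
      simpa using this
    refine ⟨u0, u1, ?_, hend⟩
    rcases Nat.lt_or_ge 1 ℓ with h1ℓ | h1ℓ
    · have hp1 := pair hℓn hpair h1ℓ
      rw [show S.length - 1 - 1 = S.length - 2 from by omega] at hp1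
      rw [u1] at hp1
      have := map_not_eq hp1.symm
      simpa using this
    · have : ℓ = 1 := by omega
      subst this
      rw [show S.length - 1 - 2 = S.length - 2 - 1 by omega] at u2
      rw [show S.length - 1 - 1 = S.length - 2 by omega] at u3
      exact u3

private lemma back_head_last (t : List Bool)
    (ht1 : [false, true] <+: t) (ht2 : [false, true] <:+ t) :
    ∀ k S, HDelN k S t → S[0]? = some false ∧ S[S.length - 1]? = some true := by
  intro k
  induction k with
  | zero =>
    intro S h
    have hSt : S = t := h
    subst hSt
    constructor
    · obtain ⟨r, rfl⟩ := ht1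
      simp
    · obtain ⟨r, hr⟩ := ht2
      rw [← hr]
      rw [List.getElem?_append, if_neg (by simp)]
      simp
  | succ k ih =>
    intro S h
    obtain ⟨U, hSU, hUt⟩ := h
    obtain ⟨hU0, hU1⟩ := ih U hUt
    obtain ⟨ℓ, hℓ1, hℓ2, hpair, hcase⟩ := hSU
    have hn2 : 2 ≤ S.length := by omega
    have hℓn : ℓ ≤ S.length := le_trans hℓ2 (Nat.div_le_self _ _)
    have hp0 := pair hℓn hpair (show 0 < ℓ by omega)
    simp only [Nat.sub_zero] at hp0
    rcases hcase with rfl | rfl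
    · simp only [List.getElem?_drop, List.length_drop] at hU1
      rw [show ℓ + (S.length - ℓ - 1) = S.length - 1 by omega] at hU1
      refine ⟨?_, hU1⟩
      rw [hp0, hU1]; rfl
    · simp only [List.getElem?_take, List.length_take] at hU0 hU1
      rw [Nat.min_eq_left (Nat.sub_le _ _)] at hU1
      rw [if_pos (by omega)] at hU0
      refine ⟨hU0, ?_⟩
      rw [hU0] at hp0
      have := map_not_eq hp0.symm
      simpa using this

private lemma chain_notbad : ∀ (L : List (List Bool)), L.Chain' HDel →
    (∀ a ∈ L.head?, ¬ Bad a) → ∀ S ∈ L, ¬ Bad S := by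
  intro L
  induction L with
  | nil => simp
  | cons a L ih =>
    intro hc hh S hS
    rw [List.Chain', List.isChain_cons] at hc
    rcases List.mem_cons.mp hS with rfl | hS
    · exact hh S (by simp)
    · apply ih hc.2 _ S hS
      intro b hb
      exact fun hB => hh a (by simp) (bad_back (hc.1 b hb) hB)

private lemma chain_to_last : ∀ (L : List (List Bool)) (tl : List Bool), L.Chain' HDel →
    L.getLast? = some tl → ∀ S ∈ L, ∃ k, HDelN k S tl := by
  intro L
  induction L with
  | nil => simp
  | cons a L ih =>
    intro tl hc hlast S hS
    rw [List.Chain', List.isChain_cons] at hc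
    cases L with
    | nil =>
      simp at hlast hS
      subst hlast; subst hS
      exact ⟨0, rfl⟩
    | cons b L' =>
      have hlast' : (b :: L').getLast? = some tl := by
        rwa [List.getLast?_cons_cons] at hlast
      rcases List.mem_cons.mp hS with rfl | hS
      · obtain ⟨k, hk⟩ := ih tl hc.2 hlast' b (by simp)
        exact ⟨k + 1, b, hc.1 b rfl, hk⟩
      · exact ih tl hc.2 hlast' S hS


/-- If a sequence of (modified) hairpin deletions transforms `s` into `t`, where both
`s` and `t` have prefix `01` and suffix `1̄0̄ = 01`, then every intermediate string `S`
starts with `0` and ends with `0̄ = 1`; moreover `S[2] = 1` or `S[|S|−1] = 1̄ = 0`. -/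
theorem always_01_or_10
    (s t : List Bool)
    (hs1 : [false, true] <+: s) (hs2 : [false, true] <:+ s)
    (ht1 : [false, true] <+: t) (ht2 : [false, true] <:+ t)
    (L : List (List Bool)) (hhead : L.head? = some s) (hlast : L.getLast? = some t)
    (hchain : L.Chain' HDel) :
    ∀ S ∈ L, S.head? = some false ∧ S.getLast? = some true ∧
      (S[1]? = some true ∨ S[S.length - 2]? = some false) := by
  intro S hS
  have hnotbad : ¬ Bad S := by
    apply chain_notbad L hchain _ S hS
    intro a ha
    rw [hhead] at ha
    have haa : s = a := by simpa using ha
    subst haa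
    intro hB
    obtain ⟨h0, h1, _, _⟩ := hB
    obtain ⟨r, rfl⟩ := hs1
    simp at h1
  obtain ⟨k, hk⟩ := chain_to_last L t hchain hlast S hS
  obtain ⟨hH, hL⟩ := back_head_last t ht1 ht2 k S hk
  have hlen : 2 ≤ S.length := by
    have l0 : 0 < S.length := (List.getElem?_eq_some_iff.mp hH).1
    by_contra hc
    push_neg at hc
    have : S.length = 1 := by omega
    rw [this] at hL
    norm_num at hL
    rw [hL] at hH
    simp at hH
  refine ⟨?_, ?_, ?_⟩
  · rw [List.head?_eq_getElem?]; exact hH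
  · rw [List.getLast?_eq_getElem?]; exact hL
  · obtain ⟨b, hb⟩ : ∃ b, S[1]? = some b :=
      ⟨_, List.getElem?_eq_getElem (by omega)⟩
    obtain ⟨c, hc⟩ : ∃ c, S[S.length - 2]? = some c :=
      ⟨_, List.getElem?_eq_getElem (by omega)⟩
    cases b with
    | true => exact Or.inl hb
    | false =>
      cases c with
      | false => exact Or.inr hc
      | true => exact absurd ⟨hH, hb, hc, hL⟩ hnotbad
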